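/- Let μ be a finite Borel measure on ℝ and 0 < α < 2. Then ∫_ℝ |λ|^{2α} dμ(λ) < ∞ if and only if ∫_ℝ (∫_ℝ |e^{ihλ} + e^{−ihλ} − 2|² dμ(λ)) |h|^{−1−2α} dh < ∞. -/

import Mathlib

open MeasureTheory Set
open scoped ENNReal

private lemma norm_sq_eq_cos (x : ℝ) :
    ‖Complex.exp (Complex.I * x) + Complex.exp (-(Complex.I * x)) - 2‖ ^ 2
      = (2 - 2 * Real.cos x) ^ 2 := by
  have h1 : Complex.exp (Complex.I * x) + Complex.exp (-(Complex.I * x)) - 2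
      = ((2 * Real.cos x - 2 : ℝ) : ℂ) := by
    have e1 : Complex.I * (x : ℂ) = (x : ℂ) * Complex.I := mul_comm _ _
    have e2 : -((x : ℂ) * Complex.I) = ((-x : ℝ) : ℂ) * Complex.I := by push_cast; ring
    rw [e1, e2, Complex.exp_mul_I, Complex.exp_mul_I]
    push_cast
    simp [Complex.cos_neg, Complex.sin_neg, ← Complex.ofReal_cos]
    ring
  rw [h1, Complex.norm_real, Real.norm_eq_abs, sq_abs]
  ring

/-- lintegral of an even function over ℝ, reduced to the positive half line. -/
private lemma lintegral_abs_comp (f : ℝ → ℝ≥0∞) :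
    (∫⁻ x : ℝ, f |x|) = 2 * ∫⁻ x in Ioi (0 : ℝ), f x := by
  have m : MeasurableEmbedding fun x : ℝ => -x :=
    (Homeomorph.neg ℝ).measurableEmbedding
  have h1 : (∫⁻ x : ℝ, f |x|)
      = (∫⁻ x in Iio (0 : ℝ), f |x|) + ∫⁻ x in Ici (0 : ℝ), f |x| := by
    rw [← lintegral_add_compl (fun x : ℝ => f |x|) measurableSet_Iio, compl_Iio]
  have h2 : (volume : Measure ℝ).restrict (Iio 0)
      = ((volume : Measure ℝ).restrict (Ioi 0)).map (fun x : ℝ => -x) := by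
    have hv : Measure.map (fun x : ℝ => -x) volume = volume :=
      Measure.map_neg_eq_self (volume : Measure ℝ)
    have hpre : (fun x : ℝ => -x) ⁻¹' (Iio 0) = Ioi 0 := by ext x; simp
    conv_lhs => rw [← hv]
    rw [m.restrict_map, hpre]
  have h3 : (∫⁻ x in Iio (0 : ℝ), f |x|) = ∫⁻ x in Ioi (0 : ℝ), f |x| := by
    rw [h2, m.lintegral_map]
    simp
  have h4 : (∫⁻ x in Ici (0 : ℝ), f |x|) = ∫⁻ x in Ioi (0 : ℝ), f |x| := by
    refine setLIntegral_congr ?_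
    exact Ioi_ae_eq_Ici.symm
  have h5 : (∫⁻ x in Ioi (0 : ℝ), f |x|) = ∫⁻ x in Ioi (0 : ℝ), f x := by
    refine setLIntegral_congr_fun measurableSet_Ioi ?_
    intro x hx
    simp only [abs_of_pos (mem_Ioi.1 hx)]
  rw [h1, h3, h4, h5, two_mul]

private lemma lint_min_lt_top {c d : ℝ} (hc : -1 < c) (hd : d < -1) :
    (∫⁻ x : ℝ, ENNReal.ofReal (min (|x| ^ c) (|x| ^ d))) < ⊤ := by
  have habs : (∫⁻ x : ℝ, ENNReal.ofReal (min (|x| ^ c) (|x| ^ d)))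
      = 2 * ∫⁻ x in Ioi (0 : ℝ), ENNReal.ofReal (min (x ^ c) (x ^ d)) :=
    lintegral_abs_comp fun y => ENNReal.ofReal (min (y ^ c) (y ^ d))
  rw [habs]
  have hsplit : (∫⁻ x in Ioi (0 : ℝ), ENNReal.ofReal (min (x ^ c) (x ^ d)))
      ≤ (∫⁻ x in Ioc (0 : ℝ) 1, ENNReal.ofReal (x ^ c))
        + ∫⁻ x in Ioi (1 : ℝ), ENNReal.ofReal (x ^ d) := by
    have : Ioi (0 : ℝ) = Ioc 0 1 ∪ Ioi 1 := (Ioc_union_Ioi_eq_Ioi zero_le_one).symm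
    rw [this]
    refine le_trans (lintegral_union_le _ _ _) (add_le_add ?_ ?_)
    · exact lintegral_mono fun x => ENNReal.ofReal_le_ofReal (min_le_left _ _)
    · exact lintegral_mono fun x => ENNReal.ofReal_le_ofReal (min_le_right _ _)
  have h1 : (∫⁻ x in Ioc (0 : ℝ) 1, ENNReal.ofReal (x ^ c)) < ⊤ := by
    have : IntegrableOn (fun x : ℝ => x ^ c) (Ioc 0 1) volume := by
      have := (intervalIntegral.intervalIntegrable_rpow' (a := 0) (b := 1) hc)
      rwa [intervalIntegrable_iff_integrableOn_Ioc_of_le zero_le_one] at this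
    exact this.lintegral_lt_top
  have h2 : (∫⁻ x in Ioi (1 : ℝ), ENNReal.ofReal (x ^ d)) < ⊤ := by
    have : IntegrableOn (fun x : ℝ => x ^ d) (Ioi 1) volume :=
      (integrableOn_Ioi_rpow_iff zero_lt_one).2 hd
    exact this.lintegral_lt_top
  calc 2 * (∫⁻ x in Ioi (0 : ℝ), ENNReal.ofReal (min (x ^ c) (x ^ d)))
      ≤ 2 * ((∫⁻ x in Ioc (0 : ℝ) 1, ENNReal.ofReal (x ^ c))
        + ∫⁻ x in Ioi (1 : ℝ), ENNReal.ofReal (x ^ d)) := by gcongr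
    _ < ⊤ := by
        refine ENNReal.mul_lt_top (by simp) (ENNReal.add_lt_top.2 ⟨h1, h2⟩)

private lemma C_lt_top {α : ℝ} (hα0 : 0 < α) (hα2 : α < 2) :
    (∫⁻ h : ℝ, ENNReal.ofReal ((2 - 2 * Real.cos h) ^ 2 * |h| ^ (-1 - 2 * α))) < ⊤ := by
  have hpt : ∀ h : ℝ, (2 - 2 * Real.cos h) ^ 2 * |h| ^ (-1 - 2 * α)
      ≤ 16 * min (|h| ^ (3 - 2 * α)) (|h| ^ (-1 - 2 * α)) := by
    intro h
    rcases eq_or_ne h 0 with rfl | hh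
    · have h10 : (-1 - 2 * α) ≠ 0 := by nlinarith
      rw [abs_zero, Real.zero_rpow h10, mul_zero]
      have m1 : (0:ℝ) ≤ (0:ℝ) ^ (3 - 2 * α) := Real.rpow_nonneg le_rfl _
      have m2 : (0:ℝ) ≤ (0:ℝ) ^ (-1 - 2 * α) := Real.rpow_nonneg le_rfl _
      rw [min_eq_right m1]
      norm_num
    · have habs : (0 : ℝ) < |h| := abs_pos.2 hh
      have ha0 : (0 : ℝ) ≤ 2 - 2 * Real.cos h := by nlinarith [Real.cos_le_one h]
      have ha4 : 2 - 2 * Real.cos h ≤ 4 := by nlinarith [Real.neg_one_le_cos h]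
      have hah : 2 - 2 * Real.cos h ≤ h ^ 2 := by
        nlinarith [Real.one_sub_sq_div_two_le_cos (x := h)]
      have hw : (0 : ℝ) ≤ |h| ^ (-1 - 2 * α) := Real.rpow_nonneg (abs_nonneg h) _
      have h1 : (2 - 2 * Real.cos h) ^ 2 * |h| ^ (-1 - 2 * α)
          ≤ 16 * (|h| ^ (-1 - 2 * α)) := by
        have hsq : (2 - 2 * Real.cos h) ^ 2 ≤ 16 := by nlinarith
        exact mul_le_mul_of_nonneg_right hsq hw
      have h2 : (2 - 2 * Real.cos h) ^ 2 * |h| ^ (-1 - 2 * α)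
          ≤ 16 * (|h| ^ (3 - 2 * α)) := by
        have e1 : |h| ^ (3 - 2 * α) = |h| ^ (4 : ℝ) * |h| ^ (-1 - 2 * α) := by
          rw [← Real.rpow_add habs]; congr 1; ring
        have e2 : |h| ^ (4 : ℝ) = h ^ 4 := by
          rw [show (4 : ℝ) = ((4 : ℕ) : ℝ) by norm_num, Real.rpow_natCast]
          rw [← abs_pow, abs_of_nonneg (by positivity)]
        have hsq : (2 - 2 * Real.cos h) ^ 2 ≤ h ^ 4 := by nlinarith
        rw [e1, e2]
        nlinarith
      rcases le_total (|h| ^ (3 - 2 * α)) (|h| ^ (-1 - 2 * α)) with hmin | hmin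
      · rw [min_eq_left hmin]; exact h2
      · rw [min_eq_right hmin]; exact h1
  have hmono : (∫⁻ h : ℝ, ENNReal.ofReal ((2 - 2 * Real.cos h) ^ 2 * |h| ^ (-1 - 2 * α)))
      ≤ ∫⁻ h : ℝ, ENNReal.ofReal 16
          * ENNReal.ofReal (min (|h| ^ (3 - 2 * α)) (|h| ^ (-1 - 2 * α))) := by
    refine lintegral_mono fun h => ?_
    rw [← ENNReal.ofReal_mul (by norm_num)]
    exact ENNReal.ofReal_le_ofReal (hpt h)
  refine lt_of_le_of_lt hmono ?_
  rw [lintegral_const_mul' _ _ ENNReal.ofReal_ne_top]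
  exact ENNReal.mul_lt_top ENNReal.ofReal_lt_top
    (lint_min_lt_top (by linarith) (by linarith))

private lemma C_pos {α : ℝ} :
    0 < ∫⁻ h : ℝ, ENNReal.ofReal ((2 - 2 * Real.cos h) ^ 2 * |h| ^ (-1 - 2 * α)) := by
  have hf : Measurable fun h : ℝ =>
      ENNReal.ofReal ((2 - 2 * Real.cos h) ^ 2 * |h| ^ (-1 - 2 * α)) := by fun_prop
  rw [lintegral_pos_iff_support hf]
  have hsub : Ioo (0 : ℝ) 1 ⊆ Function.support fun h : ℝ =>
      ENNReal.ofReal ((2 - 2 * Real.cos h) ^ 2 * |h| ^ (-1 - 2 * α)) := by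
    intro h hh
    have h2pi : h < 2 * Real.pi := by nlinarith [Real.pi_gt_three, hh.2]
    have hne : Real.cos h ≠ 1 := fun he => hh.1.ne'
      ((Real.cos_eq_one_iff_of_lt_of_lt (by nlinarith [Real.pi_gt_three, hh.1]) h2pi).1 he)
    have hcos : Real.cos h < 1 := lt_of_le_of_ne (Real.cos_le_one h) hne
    have hg : (0 : ℝ) < (2 - 2 * Real.cos h) ^ 2 :=
      pow_pos (by nlinarith) 2
    have hwpos : (0 : ℝ) < |h| ^ (-1 - 2 * α) :=
      Real.rpow_pos_of_pos (abs_pos.2 (ne_of_gt hh.1)) _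
    simp only [Function.mem_support, ne_eq, ENNReal.ofReal_eq_zero, not_le]
    have hg2 : (0:ℝ) < 2 - 2 * Real.cos h := by nlinarith
    exact mul_pos hg hwpos
  calc (0 : ℝ≥0∞) < volume (Ioo (0 : ℝ) 1) := by rw [Real.volume_Ioo]; norm_num
    _ ≤ _ := measure_mono hsub

private lemma scaling {α : ℝ} (hα0 : 0 < α) (lam : ℝ) :
    (∫⁻ h : ℝ, ENNReal.ofReal ((2 - 2 * Real.cos (h * lam)) ^ 2 * |h| ^ (-1 - 2 * α)))
      = (∫⁻ h : ℝ, ENNReal.ofReal ((2 - 2 * Real.cos h) ^ 2 * |h| ^ (-1 - 2 * α)))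
        * ENNReal.ofReal (|lam| ^ (2 * α)) := by
  rcases eq_or_ne lam 0 with rfl | hlam
  · simp [Real.zero_rpow (by positivity : (2 * α) ≠ 0)]
  · have habs : (0 : ℝ) < |lam| := abs_pos.2 hlam
    have hstep1 : ∀ h : ℝ, (2 - 2 * Real.cos (h * lam)) ^ 2 * |h| ^ (-1 - 2 * α)
        = ((2 - 2 * Real.cos (h * lam)) ^ 2 * |h * lam| ^ (-1 - 2 * α))
            * |lam| ^ (-(-1 - 2 * α)) := by
      intro h
      have hone : |lam| ^ (-1 - 2 * α) * |lam| ^ (-(-1 - 2 * α)) = 1 := by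
        rw [← Real.rpow_add habs, add_neg_cancel, Real.rpow_zero]
      rw [abs_mul, Real.mul_rpow (abs_nonneg h) (abs_nonneg lam), mul_assoc, mul_assoc, hone,
        mul_one]
    simp_rw [hstep1]
    have hsplit : ∀ h : ℝ,
        ENNReal.ofReal (((2 - 2 * Real.cos (h * lam)) ^ 2 * |h * lam| ^ (-1 - 2 * α))
            * |lam| ^ (-(-1 - 2 * α)))
        = ENNReal.ofReal ((2 - 2 * Real.cos (h * lam)) ^ 2 * |h * lam| ^ (-1 - 2 * α))
            * ENNReal.ofReal (|lam| ^ (-(-1 - 2 * α))) := by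
      intro h
      rw [ENNReal.ofReal_mul (by positivity)]
    simp_rw [hsplit]
    rw [lintegral_mul_const' _ _ ENNReal.ofReal_ne_top]
    have hmeas : Measurable fun u : ℝ =>
        ENNReal.ofReal ((2 - 2 * Real.cos u) ^ 2 * |u| ^ (-1 - 2 * α)) := by fun_prop
    have hmap : (∫⁻ h : ℝ,
        ENNReal.ofReal ((2 - 2 * Real.cos (h * lam)) ^ 2 * |h * lam| ^ (-1 - 2 * α)))
        = ENNReal.ofReal |lam⁻¹|
          * ∫⁻ u : ℝ, ENNReal.ofReal ((2 - 2 * Real.cos u) ^ 2 * |u| ^ (-1 - 2 * α)) := by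
      rw [← smul_eq_mul (a := ENNReal.ofReal |lam⁻¹|), ← lintegral_smul_measure, ← Real.map_volume_mul_right hlam,
        lintegral_map hmeas (measurable_mul_const lam)]
    rw [hmap]
    rw [mul_comm (ENNReal.ofReal |lam⁻¹|), mul_assoc]
    congr 1
    rw [← ENNReal.ofReal_mul (abs_nonneg _)]
    congr 1
    rw [abs_inv, ← Real.rpow_neg_one |lam|, ← Real.rpow_add habs]
    congr 1
    ring

theorem stmt_7 (μ : Measure ℝ) [IsFiniteMeasure μ] (α : ℝ) (hα0 : 0 < α) (hα2 : α < 2) :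
    (∫⁻ lam : ℝ, ENNReal.ofReal (|lam| ^ (2 * α)) ∂μ) < ⊤ ↔
    (∫⁻ h : ℝ,
        (∫⁻ lam : ℝ, ENNReal.ofReal
            (‖Complex.exp (Complex.I * h * lam) + Complex.exp (-(Complex.I * h * lam)) - 2‖ ^ 2)
          ∂μ) * ENNReal.ofReal (|h| ^ (-1 - 2 * α)) ∂volume) < ⊤ := by
  set C : ℝ≥0∞ := ∫⁻ h : ℝ, ENNReal.ofReal ((2 - 2 * Real.cos h) ^ 2 * |h| ^ (-1 - 2 * α))
    with hC
  have hCpos : 0 < C := C_pos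
  have hCtop : C < ⊤ := C_lt_top hα0 hα2
  have hcast : ∀ h lam : ℝ, (Complex.I * (h : ℂ) * (lam : ℂ)) = Complex.I * ((h * lam : ℝ) : ℂ) := by
    intro h lam; push_cast; ring
  have key : (∫⁻ h : ℝ,
        (∫⁻ lam : ℝ, ENNReal.ofReal
            (‖Complex.exp (Complex.I * h * lam) + Complex.exp (-(Complex.I * h * lam)) - 2‖ ^ 2)
          ∂μ) * ENNReal.ofReal (|h| ^ (-1 - 2 * α)) ∂volume)
      = C * ∫⁻ lam : ℝ, ENNReal.ofReal (|lam| ^ (2 * α)) ∂μ := by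
    have step1 : ∀ h : ℝ,
        (∫⁻ lam : ℝ, ENNReal.ofReal
            (‖Complex.exp (Complex.I * h * lam) + Complex.exp (-(Complex.I * h * lam)) - 2‖ ^ 2)
          ∂μ) * ENNReal.ofReal (|h| ^ (-1 - 2 * α))
        = ∫⁻ lam : ℝ,
            ENNReal.ofReal ((2 - 2 * Real.cos (h * lam)) ^ 2 * |h| ^ (-1 - 2 * α)) ∂μ := by
      intro h
      rw [← lintegral_mul_const' _ _ ENNReal.ofReal_ne_top]
      refine lintegral_congr fun lam => ?_
      rw [hcast, norm_sq_eq_cos, ← ENNReal.ofReal_mul (sq_nonneg _)]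
    simp_rw [step1]
    rw [lintegral_lintegral_swap]
    · have step2 : ∀ lam : ℝ,
          (∫⁻ h : ℝ, ENNReal.ofReal ((2 - 2 * Real.cos (h * lam)) ^ 2 * |h| ^ (-1 - 2 * α)))
          = C * ENNReal.ofReal (|lam| ^ (2 * α)) := by
        intro lam
        rw [scaling hα0 lam, hC, mul_comm]
      simp_rw [step2]
      rw [lintegral_const_mul' _ _ hCtop.ne]
    · have : Measurable fun p : ℝ × ℝ =>
          ENNReal.ofReal ((2 - 2 * Real.cos (p.1 * p.2)) ^ 2 * |p.1| ^ (-1 - 2 * α)) := by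
        fun_prop
      exact this.aemeasurable
  rw [key]
  constructor
  · intro hL
    exact ENNReal.mul_lt_top hCtop hL
  · intro hR
    by_contra hL
    rw [not_lt, top_le_iff] at hL
    rw [hL, ENNReal.mul_top hCpos.ne'] at hR
    exact absurd hR (lt_irrefl ⊤)
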